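/- Let G be a finitely generated abelian group (written additively). If there exist positive integers m, n, an automorphism σ of G, and an element x ∈ G of infinite order such that n·σ(x) = m·x, then n = m. -/

import Mathlib

open Module

/-- In a free `ℤ`-module, `nsmul` by a positive natural is injective. -/
private lemma nsmul_cancel {M : Type*} [AddCommGroup M] [Module ℤ M] [Module.Free ℤ M]
    {d : ℕ} (hd : 0 < d) {y z : M} (h : d • y = d • z) : y = z := by
  set B := Module.Free.chooseBasis ℤ M with hB
  apply B.repr.injective
  ext i
  have h2 := congrArg (fun w => B.repr w i) h
  simp only [map_nsmul, Finsupp.coe_smul, Pi.smul_apply, nsmul_eq_mul] at h2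
  have hdz : (d : ℤ) ≠ 0 := by exact_mod_cast hd.ne'
  exact mul_left_cancel₀ hdz (by linear_combination h2)

private lemma aux_eig {M : Type*} [AddCommGroup M] [Module ℤ M]
    [Module.Finite ℤ M] [Module.Free ℤ M]
    (τ : M ≃ₗ[ℤ] M) (v : M) (hv : v ≠ 0) (a b : ℕ) (ha : 0 < a)
    (hab : Nat.Coprime a b) (h : a • τ v = b • v) : a = 1 := by
  by_contra hne
  have ha2 : 2 ≤ a := by omega
  set B := Module.Free.chooseBasis ℤ M with hB
  -- descent
  have key : ∀ k : ℕ, ∃ w : M, v = a ^ k • w ∧ a • τ w = b • w := by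
    intro k
    induction k with
    | zero => exact ⟨v, by simp, h⟩
    | succ k ih =>
      obtain ⟨w, hw1, hw2⟩ := ih
      -- each coordinate of w is divisible by a
      have hdvd : ∀ i, (a : ℤ) ∣ B.repr w i := by
        intro i
        have hco : (a : ℤ) * B.repr (τ w) i = (b : ℤ) * B.repr w i := by
          have := congrArg (fun z => B.repr z i) hw2
          simp only [map_nsmul, Finsupp.coe_smul, Pi.smul_apply, nsmul_eq_mul] at this
          exact this
        have hd : (a : ℤ) ∣ (b : ℤ) * B.repr w i := ⟨B.repr (τ w) i, hco.symm⟩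
        exact (Nat.isCoprime_iff_coprime.mpr hab).dvd_of_dvd_mul_left hd
      -- construct u with w = a • u
      set c := (B.repr w).mapRange (· / (a : ℤ)) (by simp) with hc
      set u := B.repr.symm c with hu
      have hwu : w = a • u := by
        apply B.repr.injective
        ext i
        simp only [hu, hc, map_nsmul, LinearEquiv.apply_symm_apply, Finsupp.coe_smul,
          Pi.smul_apply, Finsupp.mapRange_apply, smul_eq_mul, nsmul_eq_mul]
        exact (Int.mul_ediv_cancel' (hdvd i)).symm
      have hrel : a • τ u = b • u := by
        apply nsmul_cancel ha
        have h1 := hw2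
        rw [hwu, map_nsmul, smul_smul, smul_smul, mul_comm b a, ← smul_smul, ← smul_smul] at h1
        exact h1
      exact ⟨u, by rw [hw1, hwu, smul_smul, ← pow_succ], hrel⟩
  -- contradiction: some coordinate of v is nonzero yet divisible by all powers of a
  have hvr : B.repr v ≠ 0 := fun hz => hv (by simpa using B.repr.injective (by simpa using hz))
  obtain ⟨i, hi⟩ := Finsupp.ne_iff.mp hvr
  have hdvd : ∀ k : ℕ, ((a : ℤ)) ^ k ∣ B.repr v i := by
    intro k
    obtain ⟨w, hw, -⟩ := key k
    refine ⟨B.repr w i, ?_⟩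
    have := congrArg (fun z => B.repr z i) hw
    simp only [map_nsmul, Finsupp.coe_smul, Pi.smul_apply, nsmul_eq_mul] at this
    exact_mod_cast this
  simp only [Finsupp.coe_zero, Pi.zero_apply] at hi
  set c := B.repr v i with hci
  have hlt : (c.natAbs : ℤ) < (a : ℤ) ^ c.natAbs := by
    exact_mod_cast Nat.lt_pow_self (n := c.natAbs) (by omega : 1 < a)
  have := Int.eq_zero_of_abs_lt_dvd (hdvd c.natAbs) (by
    rw [Int.abs_eq_natAbs]; exact hlt)
  exact hi this

/-- Lemma 3 of the paper: if `G` is a finitely generated abelian group,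
`σ` an automorphism of `G`, `x ∈ G` of infinite order, and `m, n` positive
integers with `n • σ x = m • x`, then `n = m`. -/
theorem stmt_4 (G : Type*) [AddCommGroup G] [AddGroup.FG G]
    (m n : ℕ) (hm : 0 < m) (hn : 0 < n)
    (σ : G ≃+ G) (x : G) (hx : ∀ k : ℕ, 0 < k → k • x ≠ 0)
    (h : n • σ x = m • x) :
    n = m := by
  have : Module.Finite ℤ G := Module.Finite.iff_addGroup_fg.mpr ‹_›
  set T := Submodule.torsion ℤ G with hT
  -- the induced automorphism on the torsion-free quotient
  have htor : ∀ (f : G ≃+ G), ∀ y ∈ T, f y ∈ T := by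
    rintro f y ⟨a, hy⟩
    refine ⟨a, ?_⟩
    have hy' : (a : ℤ) • y = 0 := hy
    show (a : ℤ) • f y = 0
    rw [← map_zsmul f, hy', map_zero]
  have hmap : T.map σ.toIntLinearEquiv.toLinearMap = T := by
    apply le_antisymm
    · rintro _ ⟨y, hyT, rfl⟩
      exact htor σ y hyT
    · intro z hz
      exact ⟨σ.symm z, htor σ.symm z hz, σ.apply_symm_apply z⟩
  set τ : (G ⧸ T) ≃ₗ[ℤ] (G ⧸ T) :=
    Submodule.Quotient.equiv T T σ.toIntLinearEquiv hmap with hτ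
  set v : G ⧸ T := Submodule.Quotient.mk x with hv
  have hvne : v ≠ 0 := by
    intro hz
    rw [hv, Submodule.Quotient.mk_eq_zero] at hz
    obtain ⟨a, ha⟩ := hz
    have ha : (a : ℤ) • x = 0 := ha
    refine hx (a : ℤ).natAbs ?_ ?_
    · have := a.2
      simp only [mem_nonZeroDivisors_iff_ne_zero] at this
      omega
    · have h0 : ((a : ℤ).natAbs : ℤ) • x = 0 := by
        rcases Int.natAbs_eq (a : ℤ) with he | he
        · rw [← he]; exact ha
        · rw [← neg_neg (((a : ℤ).natAbs : ℤ)), ← he, neg_smul, ha, neg_zero]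
      simpa [natCast_zsmul] using h0
  have hτv : τ v = Submodule.Quotient.mk (σ x) := by
    simp [hτ, hv, Submodule.Quotient.equiv, AddEquiv.toIntLinearEquiv, Submodule.mapQ_apply]
  have hrel : n • τ v = m • v := by
    rw [hτv, hv, ← Submodule.Quotient.mk_smul, ← Submodule.Quotient.mk_smul, h]
  -- reduce to coprime case
  set d := Nat.gcd m n with hd
  have hd0 : 0 < d := Nat.gcd_pos_of_pos_left _ hm
  obtain ⟨m', hm'⟩ : d ∣ m := Nat.gcd_dvd_left m n
  obtain ⟨n', hn'⟩ : d ∣ n := Nat.gcd_dvd_right m n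
  have hcop : Nat.Coprime m' n' := by
    have h1 : m' = m / d := by rw [hm', Nat.mul_div_cancel_left _ hd0]
    have h2 : n' = n / d := by rw [hn', Nat.mul_div_cancel_left _ hd0]
    rw [h1, h2, hd]
    exact Nat.coprime_div_gcd_div_gcd (hd ▸ hd0)
  have hm'0 : 0 < m' := Nat.pos_of_ne_zero fun h0 => by simp [h0] at hm'; omega
  have hn'0 : 0 < n' := Nat.pos_of_ne_zero fun h0 => by simp [h0] at hn'; omega
  have hrel' : n' • τ v = m' • v := by
    apply nsmul_cancel hd0
    rw [smul_smul, smul_smul, ← hm', ← hn']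
    exact hrel
  have hn'1 : n' = 1 := aux_eig τ v hvne n' m' hn'0 hcop.symm hrel'
  have hrel'' : m' • τ.symm v = 1 • v := by
    rw [hn'1, one_smul] at hrel'
    have := congrArg τ.symm hrel'
    rw [τ.symm_apply_apply, map_nsmul] at this
    rw [one_smul, ← this]
  have hm'1 : m' = 1 := aux_eig τ.symm v hvne m' 1 hm'0 (Nat.coprime_one_right _) hrel''
  rw [hn', hm', hn'1, hm'1]
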